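/- For θ, θ′ ∈ ℝ³ with θ₀ > √(θ₁²+θ₂²) and θ₀′ > √(θ₁′²+θ₂′²), the squared Hellinger divergence (f(u) = (√u − 1)²/2) between the 2D hyperboloid distributions p_θ and p_{θ′} equals 1 − 2|θ|^{1/2}|θ′|^{1/2}·exp(|θ|/2 + |θ′|/2) / ( |θ+θ′| · exp(|θ+θ′|/2) ), where |η| = √(η₀²−η₁²−η₂²). -/

import Mathlib

open MeasureTheory

/-- The Minkowski inner product on ℝ³ (as ℝ × ℝ × ℝ). -/
noncomputable def mink3 (θ η : ℝ × ℝ × ℝ) : ℝ :=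
  θ.1 * η.1 - θ.2.1 * η.2.1 - θ.2.2 * η.2.2

/-- The Minkowski norm |θ| = √(θ₀²−θ₁²−θ₂²). -/
noncomputable def mnorm (θ : ℝ × ℝ × ℝ) : ℝ :=
  Real.sqrt (θ.1 ^ 2 - θ.2.1 ^ 2 - θ.2.2 ^ 2)

/-- The parameter space condition θ₀ > √(θ₁²+θ₂²). -/
def inHypParam (θ : ℝ × ℝ × ℝ) : Prop :=
  Real.sqrt (θ.2.1 ^ 2 + θ.2.2 ^ 2) < θ.1

/-- The density of the 2D hyperboloid distribution on ℝ². -/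
noncomputable def hypDensity2 (θ : ℝ × ℝ × ℝ) (x : ℝ × ℝ) : ℝ :=
  mnorm θ * Real.exp (mnorm θ) / (2 * Real.pi) *
    Real.exp (-(θ.1 * Real.sqrt (1 + x.1 ^ 2 + x.2 ^ 2) - θ.2.1 * x.1 - θ.2.2 * x.2)) /
      Real.sqrt (1 + x.1 ^ 2 + x.2 ^ 2)

/-- The f-divergence between two densities on ℝ². -/
noncomputable def fDivL (f : ℝ → ℝ) (p q : ℝ × ℝ → ℝ) : ℝ :=
  ∫ z : ℝ × ℝ, p z * f (q z / p z)

open Real Filter Set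

noncomputable def hker (a b c : ℝ) (x : ℝ × ℝ) : ℝ :=
  Real.exp (-(a * Real.sqrt (1 + x.1 ^ 2 + x.2 ^ 2) - b * x.1 - c * x.2)) /
    Real.sqrt (1 + x.1 ^ 2 + x.2 ^ 2)

lemma S_pos (x : ℝ × ℝ) : 0 < Real.sqrt (1 + x.1 ^ 2 + x.2 ^ 2) :=
  Real.sqrt_pos.mpr (by positivity)

lemma one_le_S (x : ℝ × ℝ) : 1 ≤ Real.sqrt (1 + x.1 ^ 2 + x.2 ^ 2) := by
  have := Real.sqrt_le_sqrt (show (1:ℝ) ≤ 1 + x.1 ^ 2 + x.2 ^ 2 by nlinarith [sq_nonneg x.1, sq_nonneg x.2])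
  simpa using this

lemma hker_pos (a b c : ℝ) (x : ℝ × ℝ) : 0 < hker a b c x :=
  div_pos (Real.exp_pos _) (S_pos x)

lemma continuous_hker (a b c : ℝ) : Continuous (hker a b c) := by
  unfold hker
  apply Continuous.div
  · apply Real.continuous_exp.comp
    apply Continuous.neg
    apply Continuous.sub
    apply Continuous.sub
    · exact continuous_const.mul (Real.continuous_sqrt.comp (by continuity))
    · exact continuous_const.mul continuous_fst
    · exact continuous_const.mul continuous_snd
  · exact Real.continuous_sqrt.comp (by continuity)
  · exact fun x => (S_pos x).ne'

lemma cauchy2 (b c u v : ℝ) : b * u + c * v ≤ Real.sqrt (b^2 + c^2) * Real.sqrt (u^2 + v^2) := by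
  have h1 : (b * u + c * v)^2 ≤ (b^2 + c^2) * (u^2 + v^2) := by nlinarith [sq_nonneg (b*v - c*u)]
  calc b * u + c * v ≤ |b * u + c * v| := le_abs_self _
    _ = Real.sqrt ((b * u + c * v)^2) := (Real.sqrt_sq_eq_abs _).symm
    _ ≤ Real.sqrt ((b^2 + c^2) * (u^2 + v^2)) := Real.sqrt_le_sqrt h1
    _ = _ := Real.sqrt_mul (by positivity) _

lemma integrable_exp_nabs {k : ℝ} (hk : 0 < k) :
    Integrable (fun t : ℝ => Real.exp (-(k * |t|))) := by
  have h1 : IntegrableOn (fun t : ℝ => Real.exp (-(k * |t|))) (Ioi 0) := by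
    apply (exp_neg_integrableOn_Ioi 0 hk).congr_fun ?_ measurableSet_Ioi
    intro x hx
    simp [abs_of_pos (show 0 < x from hx), neg_mul]
  rw [← integrableOn_univ, ← @Iio_union_Ici _ _ (0 : ℝ), integrableOn_union,
    integrableOn_Ici_iff_integrableOn_Ioi]
  refine ⟨?_, h1⟩
  rw [← (Measure.measurePreserving_neg (volume : Measure ℝ)).integrableOn_comp_preimage
      (Homeomorph.neg ℝ).measurableEmbedding]
  simp only [Function.comp_def, abs_neg, neg_preimage, neg_Iio, neg_neg, neg_zero]
  exact h1

lemma integrable_hker {a b c : ℝ} (h : Real.sqrt (b^2 + c^2) < a) :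
    Integrable (hker a b c) := by
  set ε := a - Real.sqrt (b^2 + c^2) with hε
  have hεpos : 0 < ε := by simp [hε]; linarith
  have hmaj : Integrable (fun x : ℝ × ℝ =>
      Real.exp (-(ε/2 * |x.1|)) * Real.exp (-(ε/2 * |x.2|))) := by
    rw [show (volume : Measure (ℝ × ℝ)) = volume.prod volume from Measure.volume_eq_prod ℝ ℝ]
    exact Integrable.mul_prod (integrable_exp_nabs (k := ε/2) (by linarith)) (integrable_exp_nabs (k := ε/2) (by linarith))
  apply Integrable.mono' hmaj (continuous_hker a b c).aestronglyMeasurable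
  apply ae_of_all
  intro x
  set S := Real.sqrt (1 + x.1 ^ 2 + x.2 ^ 2) with hS
  have hS1 : 1 ≤ S := one_le_S x
  have hSpos : 0 < S := S_pos x
  rw [Real.norm_of_nonneg (hker_pos a b c x).le]
  have hrS : Real.sqrt (x.1^2 + x.2^2) ≤ S := Real.sqrt_le_sqrt (by linarith)
  have habs : (|x.1| + |x.2|) / 2 ≤ S := by
    rw [← Real.sqrt_sq (by positivity : (0:ℝ) ≤ (|x.1| + |x.2|) / 2)]
    apply Real.sqrt_le_sqrt
    have h1 : |x.1|^2 = x.1^2 := sq_abs _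
    have h2 : |x.2|^2 = x.2^2 := sq_abs _
    nlinarith [sq_nonneg (|x.1| - |x.2|)]
  have hE : ε/2 * |x.1| + ε/2 * |x.2| ≤ a * S - b * x.1 - c * x.2 := by
    have h1 : b * x.1 + c * x.2 ≤ Real.sqrt (b^2 + c^2) * S :=
      (cauchy2 b c x.1 x.2).trans (by
        apply mul_le_mul_of_nonneg_left hrS (Real.sqrt_nonneg _))
    have h2 : ε * S ≤ a * S - b * x.1 - c * x.2 := by
      simp only [hε]
      nlinarith
    have h3 : ε/2 * |x.1| + ε/2 * |x.2| = ε * ((|x.1| + |x.2|)/2) := by ring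
    rw [h3]
    exact le_trans (mul_le_mul_of_nonneg_left habs hεpos.le) h2
  calc hker a b c x ≤ Real.exp (-(a * S - b * x.1 - c * x.2)) := by
        rw [hker, ← hS, div_le_iff₀ hSpos]
        nlinarith [Real.exp_pos (-(a * S - b * x.1 - c * x.2))]
    _ ≤ Real.exp (-(ε/2 * |x.1|) + -(ε/2 * |x.2|)) := by
        apply Real.exp_le_exp.mpr; linarith
    _ = _ := Real.exp_add _ _

lemma sub_sinh (s : ℝ) (hs : 0 < s) (F : ℝ → ℝ) :
    ∫ t : ℝ, F t = ∫ u : ℝ, (s * Real.cosh u) * F (s * Real.sinh u) := by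
  have hder : ∀ x ∈ (Set.univ : Set ℝ),
      HasDerivWithinAt (fun u => s * Real.sinh u) ((fun u => s * Real.cosh u) x) Set.univ x := by
    intro x _
    exact ((Real.hasDerivAt_sinh x).const_mul s).hasDerivWithinAt
  have hinj : Set.InjOn (fun u => s * Real.sinh u) Set.univ := by
    intro x _ y _ h
    exact Real.sinh_injective (mul_left_cancel₀ hs.ne' h)
  have himg : (fun u => s * Real.sinh u) '' Set.univ = Set.univ := by
    apply Set.eq_univ_of_forall
    intro y
    exact ⟨Real.arsinh (y / s), trivial, by simp [Real.sinh_arsinh]; field_simp⟩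
  have h := integral_image_eq_integral_abs_deriv_smul MeasurableSet.univ hder hinj F
  rw [himg] at h
  simp only [Measure.restrict_univ, smul_eq_mul] at h
  rw [h]
  congr 1
  funext u
  rw [abs_of_pos (mul_pos hs (Real.cosh_pos u))]

lemma boost (s A C : ℝ) (hs : 0 < s) (h : |C| < A) :
    ∫ t : ℝ, Real.exp (-(A * Real.sqrt (s^2 + t^2) - C * t)) / Real.sqrt (s^2 + t^2)
    = ∫ u : ℝ, Real.exp (-(Real.sqrt (A^2 - C^2) * (s * Real.cosh u))) := by
  have hA : 0 < A := lt_of_le_of_lt (abs_nonneg C) h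
  have hAC : 0 < A^2 - C^2 := by
    have h2 := lt_of_abs_lt h; have h3 := neg_lt_of_abs_lt h
    nlinarith [abs_nonneg C, sq_abs C]
  set cA := Real.sqrt (A^2 - C^2) with hcA
  have hcApos : 0 < cA := Real.sqrt_pos.mpr hAC
  have hcAsq : cA^2 = A^2 - C^2 := Real.sq_sqrt hAC.le
  -- step 1 : substitution
  rw [sub_sinh s hs]
  -- simplify the integrand
  have hpt : ∀ u : ℝ, (s * Real.cosh u) *
      (Real.exp (-(A * Real.sqrt (s^2 + (s * Real.sinh u)^2) - C * (s * Real.sinh u))) /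
        Real.sqrt (s^2 + (s * Real.sinh u)^2))
      = Real.exp (-(cA * (s * Real.cosh (u - Real.arsinh (C / cA))))) := by
    intro u
    have h1 : s^2 + (s * Real.sinh u)^2 = (s * Real.cosh u)^2 := by
      have := Real.cosh_sq u; nlinarith
    have h2 : Real.sqrt (s^2 + (s * Real.sinh u)^2) = s * Real.cosh u := by
      rw [h1, Real.sqrt_sq (mul_pos hs (Real.cosh_pos u)).le]
    rw [h2]
    have hpos : s * Real.cosh u ≠ 0 := (mul_pos hs (Real.cosh_pos u)).ne'
    rw [mul_div_assoc']
    rw [mul_comm (s * Real.cosh u), mul_div_assoc, div_self hpos, mul_one]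
    congr 1
    -- exponent identity
    have hsinh : Real.sinh (Real.arsinh (C / cA)) = C / cA := Real.sinh_arsinh _
    have hcosh : Real.cosh (Real.arsinh (C / cA)) = A / cA := by
      rw [Real.cosh_arsinh]
      rw [show 1 + (C / cA)^2 = (A / cA)^2 by field_simp; nlinarith]
      exact Real.sqrt_sq (by positivity)
    rw [Real.cosh_sub, hsinh, hcosh]
    field_simp
  rw [integral_congr_ae (ae_of_all _ hpt)]
  have := integral_sub_right_eq_self
    (fun u : ℝ => Real.exp (-(cA * (s * Real.cosh u)))) (Real.arsinh (C / cA)) (μ := volume)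
  simpa using this

lemma hker_swap (a b c : ℝ) : ∫ x : ℝ × ℝ, hker a b c x = ∫ x : ℝ × ℝ, hker a c b x := by
  rw [Measure.volume_eq_prod ℝ ℝ, ← integral_prod_swap]
  rw [← Measure.volume_eq_prod ℝ ℝ]
  congr 1
  funext z
  show hker a b c (z.2, z.1) = hker a c b z
  unfold hker
  rw [show 1 + z.2 ^ 2 + z.1 ^ 2 = 1 + z.1 ^ 2 + z.2 ^ 2 by ring]
  ring_nf

lemma step1 {a b c : ℝ} (ha : 0 < a) (h : b^2 + c^2 < a^2) :
    ∫ x : ℝ × ℝ, hker a b c x = ∫ x : ℝ × ℝ, hker (Real.sqrt (a^2 - c^2)) b 0 x := by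
  have hca : |c| < a := by
    rw [← Real.sqrt_sq_eq_abs, ← Real.sqrt_sq ha.le]
    exact Real.sqrt_lt_sqrt (sq_nonneg c) (by nlinarith [sq_nonneg b])
  have ha' : 0 < Real.sqrt (a^2 - c^2) := Real.sqrt_pos.mpr (by nlinarith [sq_nonneg b])
  have hint1 : Integrable (hker a b c) := by
    apply integrable_hker
    rw [← Real.sqrt_sq ha.le]
    exact Real.sqrt_lt_sqrt (by positivity) h
  have hint2 : Integrable (hker (Real.sqrt (a^2 - c^2)) b 0) := by
    apply integrable_hker
    rw [show b^2 + (0:ℝ)^2 = b^2 by ring]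
    exact Real.sqrt_lt_sqrt (sq_nonneg b) (by nlinarith [Real.sq_sqrt (show (0:ℝ) ≤ a^2 - c^2 by nlinarith [sq_nonneg b])])
  rw [Measure.volume_eq_prod ℝ ℝ] at *
  rw [integral_prod _ hint1, integral_prod _ hint2]
  congr 1
  funext x₁
  set s := Real.sqrt (1 + x₁^2) with hsdef
  have hs : 0 < s := Real.sqrt_pos.mpr (by positivity)
  have hs2 : s^2 = 1 + x₁^2 := Real.sq_sqrt (by positivity)
  have lhs_eq : ∀ A C : ℝ, ∀ x₂ : ℝ, hker A b C (x₁, x₂)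
      = Real.exp (b * x₁) * (Real.exp (-(A * Real.sqrt (s^2 + x₂^2) - C * x₂)) / Real.sqrt (s^2 + x₂^2)) := by
    intro A C x₂
    unfold hker
    simp only
    rw [show 1 + x₁^2 + x₂^2 = s^2 + x₂^2 by rw [hs2]]
    rw [mul_div_assoc', ← Real.exp_add]
    ring_nf
  calc ∫ x₂ : ℝ, hker a b c (x₁, x₂)
      = Real.exp (b * x₁) * ∫ x₂ : ℝ, Real.exp (-(a * Real.sqrt (s^2 + x₂^2) - c * x₂)) / Real.sqrt (s^2 + x₂^2) := by
        rw [← MeasureTheory.integral_const_mul]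
        exact integral_congr_ae (ae_of_all _ fun x₂ => lhs_eq a c x₂)
    _ = Real.exp (b * x₁) * ∫ x₂ : ℝ, Real.exp (-(Real.sqrt (a^2 - c^2) * Real.sqrt (s^2 + x₂^2) - 0 * x₂)) / Real.sqrt (s^2 + x₂^2) := by
        rw [boost s a c hs hca, boost s (Real.sqrt (a^2 - c^2)) 0 hs (by rwa [abs_zero])]
        rw [show Real.sqrt ((Real.sqrt (a^2-c^2))^2 - 0^2) = Real.sqrt (a^2 - c^2) by
          rw [show (Real.sqrt (a^2-c^2))^2 - 0^2 = (Real.sqrt (a^2-c^2))^2 by ring,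
            Real.sqrt_sq ha'.le]]
    _ = ∫ x₂ : ℝ, hker (Real.sqrt (a^2 - c^2)) b 0 (x₁, x₂) := by
        rw [← MeasureTheory.integral_const_mul]
        exact (integral_congr_ae (ae_of_all _ fun x₂ => lhs_eq (Real.sqrt (a^2-c^2)) 0 x₂)).symm

lemma radial_int {m : ℝ} (hm : 0 < m) :
    ∫ r in Ioi (0:ℝ), r * Real.exp (-(m * Real.sqrt (1 + r^2))) / Real.sqrt (1 + r^2)
      = Real.exp (-m) / m := by
  have key : ∀ r : ℝ, HasDerivAt (fun t : ℝ => -Real.exp (-(m * Real.sqrt (1 + t^2))) / m)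
      (r * Real.exp (-(m * Real.sqrt (1 + r^2))) / Real.sqrt (1 + r^2)) r := by
    intro r
    have h0 : (0:ℝ) < 1 + r^2 := by positivity
    have h1 : HasDerivAt (fun t : ℝ => 1 + t^2) (2*r) r := by
      simpa using ((hasDerivAt_pow 2 r).const_add 1)
    have h2 : HasDerivAt (fun t : ℝ => Real.sqrt (1 + t^2))
        (2*r / (2 * Real.sqrt (1 + r^2))) r := by
      have := (Real.hasDerivAt_sqrt h0.ne').comp r h1
      simpa [Function.comp_def, div_eq_mul_inv, mul_comm] using this
    have h2' : HasDerivAt (fun t : ℝ => Real.sqrt (1 + t^2))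
        (r / Real.sqrt (1 + r^2)) r := by
      convert h2 using 1
      field_simp
    have h3 := (((h2'.const_mul m).neg).exp.neg).div_const m
    convert h3 using 1
    · rfl
    · rfl
    have hs : Real.sqrt (1 + r^2) ≠ 0 := by positivity
    show r * Real.exp (-(m * Real.sqrt (1 + r ^ 2))) / Real.sqrt (1 + r ^ 2) = -(Real.exp (-(m * Real.sqrt (1 + r ^ 2))) * -(m * (r / Real.sqrt (1 + r ^ 2)))) / m
    field_simp
    rfl
  have hsqrt_ge : ∀ r : ℝ, r ≤ Real.sqrt (1 + r^2) := by
    intro r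
    calc r ≤ |r| := le_abs_self r
      _ = Real.sqrt (r^2) := (Real.sqrt_sq_eq_abs r).symm
      _ ≤ _ := Real.sqrt_le_sqrt (by linarith)
  have hint : IntegrableOn (fun r : ℝ => r * Real.exp (-(m * Real.sqrt (1 + r^2))) / Real.sqrt (1 + r^2)) (Ioi 0) := by
    apply Integrable.mono' (exp_neg_integrableOn_Ioi 0 hm)
    · apply Continuous.aestronglyMeasurable
      apply Continuous.div
      · exact continuous_id.mul ((continuous_const.mul (Real.continuous_sqrt.comp (by continuity))).neg.rexp)
      · exact Real.continuous_sqrt.comp (by continuity)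
      · intro x; positivity
    · filter_upwards [ae_restrict_mem measurableSet_Ioi] with r (hr : 0 < r)
      have hS : 0 < Real.sqrt (1 + r^2) := Real.sqrt_pos.mpr (by positivity)
      rw [Real.norm_of_nonneg (by positivity)]
      have h1 : Real.exp (-(m * Real.sqrt (1 + r^2))) ≤ Real.exp (-m * r) := by
        apply Real.exp_le_exp.mpr
        have := hsqrt_ge r
        nlinarith
      rw [div_le_iff₀ hS]
      calc r * Real.exp (-(m * Real.sqrt (1 + r^2))) ≤ Real.sqrt (1+r^2) * Real.exp (-m * r) := by
            apply mul_le_mul (hsqrt_ge r) h1 (Real.exp_pos _).le hS.le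
        _ = Real.exp (-m * r) * Real.sqrt (1+r^2) := by ring
  have htend : Tendsto (fun t : ℝ => -Real.exp (-(m * Real.sqrt (1 + t^2))) / m) atTop (nhds 0) := by
    have h1 : Tendsto (fun t : ℝ => Real.sqrt (1 + t^2)) atTop atTop :=
      tendsto_atTop_mono hsqrt_ge tendsto_id
    have h2 : Tendsto (fun t : ℝ => -(m * Real.sqrt (1 + t^2))) atTop atBot :=
      tendsto_neg_atBot_iff.mpr (h1.const_mul_atTop hm)
    have h3 := (Real.tendsto_exp_atBot).comp h2
    have := (h3.neg).div_const m
    simpa using this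
  have := integral_Ioi_of_hasDerivAt_of_tendsto
    (f := fun t : ℝ => -Real.exp (-(m * Real.sqrt (1 + t^2))) / m)
    (f' := fun r : ℝ => r * Real.exp (-(m * Real.sqrt (1 + r^2))) / Real.sqrt (1 + r^2))
    ((key 0).continuousAt.continuousWithinAt) (fun x _ => key x) hint htend
  rw [this]
  simp [Real.sqrt_one]
  ring

lemma coreJ0 {m : ℝ} (hm : 0 < m) :
    ∫ x : ℝ × ℝ, hker m 0 0 x = 2 * Real.pi * Real.exp (-m) / m := by
  rw [← integral_comp_polarCoord_symm (hker m 0 0)]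
  have htarget : polarCoord.target = Ioi (0:ℝ) ×ˢ Ioo (-Real.pi) Real.pi := rfl
  have hpt : ∀ p : ℝ × ℝ, p.1 • hker m 0 0 (polarCoord.symm p)
      = (fun r => r * Real.exp (-(m * Real.sqrt (1 + r^2))) / Real.sqrt (1 + r^2)) p.1
        * (fun _ : ℝ => (1:ℝ)) p.2 := by
    intro p
    have hsymm : polarCoord.symm p = (p.1 * Real.cos p.2, p.1 * Real.sin p.2) := rfl
    rw [hsymm]
    unfold hker
    simp only [smul_eq_mul]
    rw [show 1 + (p.1 * Real.cos p.2)^2 + (p.1 * Real.sin p.2)^2 = 1 + p.1^2 by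
      have := Real.sin_sq_add_cos_sq p.2; nlinarith]
    ring
  rw [integral_congr_ae (ae_of_all _ fun p => by
    rw [show p.1 • hker m 0 0 (polarCoord.symm p) = _ from hpt p])]
  rw [htarget, Measure.volume_eq_prod ℝ ℝ]
  rw [MeasureTheory.setIntegral_prod_mul (μ := (volume : Measure ℝ)) (ν := (volume : Measure ℝ))
    (fun r : ℝ => r * Real.exp (-(m * Real.sqrt (1 + r^2))) / Real.sqrt (1 + r^2))
    (fun _ : ℝ => (1:ℝ)) (Ioi 0) (Ioo (-Real.pi) Real.pi)]
  rw [radial_int hm]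
  rw [setIntegral_const]
  rw [measureReal_def, Real.volume_Ioo]
  rw [smul_eq_mul, mul_one]
  rw [ENNReal.toReal_ofReal (by linarith [Real.pi_pos] : (0:ℝ) ≤ Real.pi - -Real.pi)]
  ring

lemma coreJ {a b c : ℝ} (h : Real.sqrt (b^2 + c^2) < a) :
    ∫ x : ℝ × ℝ, hker a b c x
      = 2 * Real.pi * Real.exp (-Real.sqrt (a^2 - b^2 - c^2)) / Real.sqrt (a^2 - b^2 - c^2) := by
  have ha : 0 < a := lt_of_le_of_lt (Real.sqrt_nonneg _) h
  have hlt : b^2 + c^2 < a^2 := by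
    have h1 := Real.sq_sqrt (show (0:ℝ) ≤ b^2 + c^2 by positivity)
    nlinarith [Real.sqrt_nonneg (b^2 + c^2)]
  have hm : 0 < Real.sqrt (a^2 - b^2 - c^2) := Real.sqrt_pos.mpr (by nlinarith)
  have ha2 : 0 < Real.sqrt (a^2 - c^2) := Real.sqrt_pos.mpr (by nlinarith [sq_nonneg b])
  have ha2sq : (Real.sqrt (a^2 - c^2))^2 = a^2 - c^2 :=
    Real.sq_sqrt (by nlinarith [sq_nonneg b])
  rw [step1 ha hlt, hker_swap, step1 ha2 (by rw [ha2sq]; nlinarith [sq_nonneg b])]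
  rw [show (Real.sqrt (a^2 - c^2))^2 - b^2 = a^2 - b^2 - c^2 by rw [ha2sq]; ring]
  exact coreJ0 hm

lemma tri2 (u w v z : ℝ) :
    Real.sqrt ((u+v)^2 + (w+z)^2) ≤ Real.sqrt (u^2+w^2) + Real.sqrt (v^2+z^2) := by
  have hR : 0 ≤ Real.sqrt (u^2+w^2) + Real.sqrt (v^2+z^2) := by positivity
  rw [show Real.sqrt (u^2+w^2) + Real.sqrt (v^2+z^2)
      = Real.sqrt ((Real.sqrt (u^2+w^2) + Real.sqrt (v^2+z^2))^2) from (Real.sqrt_sq hR).symm]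
  apply Real.sqrt_le_sqrt
  have h1 := cauchy2 u w v z
  have h2 : (Real.sqrt (u^2+w^2))^2 = u^2+w^2 := Real.sq_sqrt (by positivity)
  have h3 : (Real.sqrt (v^2+z^2))^2 = v^2+z^2 := Real.sq_sqrt (by positivity)
  nlinarith

lemma hypDensity2_eq (θ : ℝ × ℝ × ℝ) :
    hypDensity2 θ = fun x => (mnorm θ * Real.exp (mnorm θ) / (2 * Real.pi)) *
      hker θ.1 θ.2.1 θ.2.2 x := by
  funext x
  unfold hypDensity2 hker
  rw [mul_div_assoc]

lemma mnorm_pos {θ : ℝ × ℝ × ℝ} (hθ : inHypParam θ) : 0 < mnorm θ := by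
  have h1 : 0 ≤ Real.sqrt (θ.2.1^2 + θ.2.2^2) := Real.sqrt_nonneg _
  have h2 := Real.sq_sqrt (show (0:ℝ) ≤ θ.2.1^2 + θ.2.2^2 by positivity)
  have := hθ
  unfold inHypParam at this
  exact Real.sqrt_pos.mpr (by nlinarith)

lemma integral_hypDensity2 {θ : ℝ × ℝ × ℝ} (hθ : inHypParam θ) :
    ∫ x : ℝ × ℝ, hypDensity2 θ x = 1 := by
  rw [hypDensity2_eq]
  rw [MeasureTheory.integral_const_mul]
  rw [coreJ hθ]
  have hm := mnorm_pos hθ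
  unfold mnorm at *
  have hπ := Real.pi_pos
  have hexp : Real.exp (Real.sqrt (θ.1^2 - θ.2.1^2 - θ.2.2^2)) *
      Real.exp (-Real.sqrt (θ.1^2 - θ.2.1^2 - θ.2.2^2)) = 1 := by
    rw [← Real.exp_add]; simp
  field_simp
  nlinarith [hexp, mul_pos hπ hm, Real.exp_pos (√(θ.1 ^ 2 - θ.2.1 ^ 2 - θ.2.2 ^ 2))]

lemma ptwise {P Q : ℝ} (hP : 0 < P) (hQ : 0 ≤ Q) :
    P * ((Real.sqrt (Q/P) - 1)^2 / 2) = (P + Q)/2 - Real.sqrt P * Real.sqrt Q := by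
  have h1 : Real.sqrt (Q/P) = Real.sqrt Q / Real.sqrt P := Real.sqrt_div hQ P
  have hsp : 0 < Real.sqrt P := Real.sqrt_pos.mpr hP
  have h2 : Real.sqrt P * Real.sqrt P = P := Real.mul_self_sqrt hP.le
  have h3 : Real.sqrt Q * Real.sqrt Q = Q := Real.mul_self_sqrt hQ
  rw [h1]
  field_simp
  nlinarith [h2, h3]

lemma hker_sqrt_mul (a b c a' b' c' : ℝ) (z : ℝ × ℝ) :
    Real.sqrt (hker a b c z) * Real.sqrt (hker a' b' c' z)
      = hker ((a+a')/2) ((b+b')/2) ((c+c')/2) z := by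
  unfold hker
  set S := Real.sqrt (1 + z.1 ^ 2 + z.2 ^ 2) with hS
  have hSpos : 0 < S := S_pos z
  have hSS : Real.sqrt S * Real.sqrt S = S := Real.mul_self_sqrt hSpos.le
  rw [Real.sqrt_div (Real.exp_pos _).le, Real.sqrt_div (Real.exp_pos _).le]
  rw [← Real.exp_half, ← Real.exp_half]
  rw [div_mul_div_comm, hSS, ← Real.exp_add]
  congr 2
  ring

theorem hellinger_hyperboloid2 (θ θ' : ℝ × ℝ × ℝ) (hθ : inHypParam θ) (hθ' : inHypParam θ') :
    fDivL (fun u => (Real.sqrt u - 1) ^ 2 / 2) (hypDensity2 θ) (hypDensity2 θ') =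
      1 - 2 * mnorm θ ^ ((1 : ℝ) / 2) * mnorm θ' ^ ((1 : ℝ) / 2) *
          Real.exp (mnorm θ / 2 + mnorm θ' / 2) /
        (mnorm (θ + θ') * Real.exp (mnorm (θ + θ') / 2)) := by
  obtain ⟨a, b, c⟩ := θ
  obtain ⟨a', b', c'⟩ := θ'
  have hcond : Real.sqrt (b^2 + c^2) < a := hθ
  have hcond' : Real.sqrt (b'^2 + c'^2) < a' := hθ'
  set mθ := mnorm (a, b, c) with hmθ
  set mθ' := mnorm (a', b', c') with hmθ'
  have hmθpos : 0 < mθ := mnorm_pos hθ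
  have hmθ'pos : 0 < mθ' := mnorm_pos hθ'
  have hπ := Real.pi_pos
  set C := mθ * Real.exp mθ / (2 * Real.pi) with hC
  set C' := mθ' * Real.exp mθ' / (2 * Real.pi) with hC'
  have hCpos : 0 < C := by positivity
  have hC'pos : 0 < C' := by positivity
  -- the averaged parameter
  have hψ : Real.sqrt (((b+b')/2)^2 + ((c+c')/2)^2) < (a+a')/2 := by
    have h1 := tri2 b c b' c'
    have h2 : ((b+b')/2)^2 + ((c+c')/2)^2 = ((b+b')^2 + (c+c')^2)/4 := by ring
    rw [h2, Real.sqrt_div' _ (by norm_num : (0:ℝ) ≤ 4),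
      show Real.sqrt 4 = 2 by
        rw [show (4:ℝ) = 2^2 by norm_num, Real.sqrt_sq (by norm_num : (0:ℝ) ≤ 2)]]
    have : Real.sqrt ((b+b')^2 + (c+c')^2) < a + a' := lt_of_le_of_lt h1 (by linarith)
    linarith
  -- integrabilities
  have Ip : Integrable (hypDensity2 (a, b, c)) := by
    rw [hypDensity2_eq]; exact (integrable_hker hcond).const_mul _
  have Iq : Integrable (hypDensity2 (a', b', c')) := by
    rw [hypDensity2_eq]; exact (integrable_hker hcond').const_mul _
  have IK : Integrable (hker ((a+a')/2) ((b+b')/2) ((c+c')/2)) := integrable_hker hψ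
  -- pointwise identity
  have hpt : ∀ z : ℝ × ℝ,
      hypDensity2 (a,b,c) z * ((Real.sqrt (hypDensity2 (a',b',c') z / hypDensity2 (a,b,c) z) - 1)^2 / 2)
      = (hypDensity2 (a,b,c) z + hypDensity2 (a',b',c') z)/2
        - (Real.sqrt C * Real.sqrt C') * hker ((a+a')/2) ((b+b')/2) ((c+c')/2) z := by
    intro z
    have hPz : 0 < hypDensity2 (a,b,c) z := by
      rw [hypDensity2_eq]; exact mul_pos hCpos (hker_pos _ _ _ _)
    have hQz : 0 < hypDensity2 (a',b',c') z := by
      rw [hypDensity2_eq]; exact mul_pos hC'pos (hker_pos _ _ _ _)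
    rw [ptwise hPz hQz.le]
    congr 1
    rw [hypDensity2_eq (a,b,c), hypDensity2_eq (a',b',c')]
    simp only
    rw [Real.sqrt_mul hCpos.le, Real.sqrt_mul hC'pos.le]
    rw [show Real.sqrt C * Real.sqrt (hker a b c z) * (Real.sqrt C' * Real.sqrt (hker a' b' c' z))
        = (Real.sqrt C * Real.sqrt C') * (Real.sqrt (hker a b c z) * Real.sqrt (hker a' b' c' z)) by ring]
    rw [hker_sqrt_mul]
  -- split the integral
  have hsplit : fDivL (fun u => (Real.sqrt u - 1) ^ 2 / 2) (hypDensity2 (a,b,c)) (hypDensity2 (a',b',c'))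
      = (1 + 1)/2 - (Real.sqrt C * Real.sqrt C') *
          ∫ z : ℝ × ℝ, hker ((a+a')/2) ((b+b')/2) ((c+c')/2) z := by
    unfold fDivL
    rw [integral_congr_ae (ae_of_all _ hpt)]
    have I1 : Integrable (fun z : ℝ × ℝ =>
        (hypDensity2 (a,b,c) z + hypDensity2 (a',b',c') z)/2) := (Ip.add Iq).div_const 2
    have I2 : Integrable (fun z : ℝ × ℝ =>
        (Real.sqrt C * Real.sqrt C') * hker ((a+a')/2) ((b+b')/2) ((c+c')/2) z) :=
      IK.const_mul _
    rw [integral_sub I1 I2]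
    rw [MeasureTheory.integral_const_mul, integral_div, integral_add Ip Iq,
      integral_hypDensity2 hθ, integral_hypDensity2 hθ']
  rw [hsplit, coreJ hψ]
  -- arithmetic
  have hD : Real.sqrt C * Real.sqrt C'
      = Real.sqrt mθ * Real.sqrt mθ' * Real.exp ((mθ + mθ')/2) / (2 * Real.pi) := by
    rw [← Real.sqrt_mul hCpos.le]
    have e1 : Real.sqrt mθ ^ 2 = mθ := Real.sq_sqrt hmθpos.le
    have e2 : Real.sqrt mθ' ^ 2 = mθ' := Real.sq_sqrt hmθ'pos.le
    have e3 : Real.exp ((mθ + mθ')/2) ^ 2 = Real.exp mθ * Real.exp mθ' := by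
      rw [sq, ← Real.exp_add, show (mθ + mθ')/2 + (mθ + mθ')/2 = mθ + mθ' by ring,
        Real.exp_add]
    have key : (Real.sqrt mθ * Real.sqrt mθ' * Real.exp ((mθ + mθ')/2) / (2 * Real.pi))^2
        = C * C' := by
      rw [div_pow, mul_pow, mul_pow, e1, e2, e3, hC, hC']
      field_simp
    rw [← key, Real.sqrt_sq (by positivity)]
  -- the combined Minkowski norm
  have hMX : (0:ℝ) < (a+a')^2 - (b+b')^2 - (c+c')^2 := by
    have h1 : (0:ℝ) ≤ Real.sqrt (((b+b')/2)^2 + ((c+c')/2)^2) := Real.sqrt_nonneg _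
    have h2 := Real.sq_sqrt (show (0:ℝ) ≤ ((b+b')/2)^2 + ((c+c')/2)^2 by positivity)
    nlinarith [hψ]
  have hM : mnorm ((a,b,c) + (a',b',c')) = Real.sqrt ((a+a')^2 - (b+b')^2 - (c+c')^2) := by
    simp [mnorm, Prod.fst_add, Prod.snd_add]
  have hMpos : 0 < mnorm ((a,b,c) + (a',b',c')) := by rw [hM]; exact Real.sqrt_pos.mpr hMX
  have hmψ : Real.sqrt (((a+a')/2)^2 - ((b+b')/2)^2 - ((c+c')/2)^2)
      = mnorm ((a,b,c) + (a',b',c')) / 2 := by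
    rw [hM]
    rw [show ((a+a')/2)^2 - ((b+b')/2)^2 - ((c+c')/2)^2 = ((a+a')^2 - (b+b')^2 - (c+c')^2)/4 by ring]
    rw [Real.sqrt_div' _ (by norm_num : (0:ℝ) ≤ 4),
      show Real.sqrt 4 = 2 by
        rw [show (4:ℝ) = 2^2 by norm_num, Real.sqrt_sq (by norm_num : (0:ℝ) ≤ 2)]]
  rw [hmψ, hD]
  rw [← Real.sqrt_eq_rpow, ← Real.sqrt_eq_rpow]
  set M := mnorm ((a,b,c) + (a',b',c')) with hMdef
  rw [show -(M/2) = -(M/2) from rfl]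
  have hexpM : Real.exp (-(M/2)) = 1 / Real.exp (M/2) := by
    rw [Real.exp_neg]; ring
  rw [show mθ / 2 + mθ' / 2 = (mθ + mθ')/2 by ring]
  rw [hexpM]
  have hexpMpos := Real.exp_pos (M/2)
  field_simp
  ring
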